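/- arXiv:2312.08978 — 2 statements merged into one kernel-verified Lean document; each statement's English description precedes it below -/
import Mathlib

section
/- Let P₀ > 0, κ > 0, ε ≥ 0, α > 0, λ > 0, β > 0, z ≥ 0 and 0 < r_e < r_m be real numbers. Then ∫_{r_e}^{r_m} P₀ κ^ε (ν² + z²)^{αε/2} · 2πβλ ν e^{−πβλ ν²} dν = P₀ πλβ e^{πλβ z²} κ^ε · ( (r_e² + z²)^{αε/2 + 1} E_{−αε/2}(πλβ (r_e² + z²)) − (r_m² + z²)^{αε/2 + 1} E_{−αε/2}(πλβ (r_m² + z²)) ), where E_n(x) = ∫_1^∞ e^{−xt} t^{−n} dt. -/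
open Real MeasureTheory intervalIntegral

/-- The generalized exponential integral `E_n(x) = ∫_1^∞ e^(−xt)/tⁿ dt`. -/
noncomputable def expInt (n x : ℝ) : ℝ :=
  ∫ t in Set.Ici (1 : ℝ), Real.exp (-(x * t)) / t ^ n

/-- `IntegrableOn (fun u => exp (-(c*u)) * u ^ p) (Ioi s)` for `c > 0`, `p ≥ 0`, `s > 0`. -/
lemma integrableOn_exp_neg_mul_rpow {p c s : ℝ} (hp : 0 ≤ p) (hc : 0 < c) (hs : 0 < s) :
    IntegrableOn (fun u : ℝ => Real.exp (-(c * u)) * u ^ p) (Set.Ioi s) := by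
  have h0 : IntegrableOn (fun x : ℝ => Real.exp (-x) * x ^ ((p + 1) - 1)) (Set.Ioi 0) :=
    Real.GammaIntegral_convergent (by linarith)
  simp only [add_sub_cancel_right] at h0
  have h1 : IntegrableOn (fun x : ℝ => Real.exp (-(c * x)) * (c * x) ^ p) (Set.Ioi s) := by
    rw [integrableOn_Ioi_comp_mul_left_iff (fun x : ℝ => Real.exp (-x) * x ^ p) s hc]
    exact h0.mono_set (Set.Ioi_subset_Ioi (by positivity))
  have h2 : IntegrableOn (fun x : ℝ => c ^ (-p) * (Real.exp (-(c * x)) * (c * x) ^ p))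
      (Set.Ioi s) := h1.const_mul (c ^ (-p))
  refine (h2.congr_fun (fun x hx => ?_) measurableSet_Ioi)
  have hx0 : 0 ≤ x := le_of_lt (lt_trans hs hx)
  dsimp only
  rw [Real.mul_rpow hc.le hx0]
  rw [show c ^ (-p) * (Real.exp (-(c * x)) * (c ^ p * x ^ p))
      = (c ^ (-p) * c ^ p) * (Real.exp (-(c * x)) * x ^ p) by ring,
    ← Real.rpow_add hc, neg_add_cancel, Real.rpow_zero, one_mul]

/-- Key identity : `s^(p+1) * E_{-p}(c s) = ∫_{Ioi s} e^{-cu} u^p du`. -/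
lemma expInt_eq_integral {p c s : ℝ} (hp : 0 ≤ p) (hc : 0 < c) (hs : 0 < s) :
    s ^ (p + 1) * expInt (-p) (c * s)
      = ∫ u in Set.Ioi s, Real.exp (-(c * u)) * u ^ p := by
  have h1 : expInt (-p) (c * s)
      = ∫ t in Set.Ioi (1 : ℝ), Real.exp (-(c * s * t)) * t ^ p := by
    rw [expInt, MeasureTheory.integral_Ici_eq_integral_Ioi]
    refine setIntegral_congr_fun measurableSet_Ioi (fun t ht => ?_)
    have ht0 : 0 ≤ t := le_of_lt (lt_trans one_pos ht)
    rw [Real.rpow_neg ht0, div_eq_mul_inv, inv_inv]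
  have h2 := MeasureTheory.integral_comp_mul_left_Ioi
      (fun u : ℝ => Real.exp (-(c * u)) * u ^ p) 1 hs
  simp only [mul_one, smul_eq_mul] at h2
  have h3 : ∫ x in Set.Ioi (1 : ℝ), Real.exp (-(c * (s * x))) * (s * x) ^ p
      = s ^ p * ∫ x in Set.Ioi (1 : ℝ), Real.exp (-(c * s * x)) * x ^ p := by
    rw [← MeasureTheory.integral_const_mul]
    refine setIntegral_congr_fun measurableSet_Ioi (fun t ht => ?_)
    have ht0 : 0 ≤ t := le_of_lt (lt_trans one_pos ht)
    rw [Real.mul_rpow hs.le ht0, ← mul_assoc c s t]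
    ring
  rw [h3] at h2
  rw [h1, Real.rpow_add_one hs.ne']
  calc s ^ p * s * ∫ x in Set.Ioi (1 : ℝ), Real.exp (-(c * s * x)) * x ^ p
      = s * (s ^ p * ∫ x in Set.Ioi (1 : ℝ), Real.exp (-(c * s * x)) * x ^ p) := by ring
    _ = s * (s⁻¹ * ∫ u in Set.Ioi s, Real.exp (-(c * u)) * u ^ p) := by rw [h2]
    _ = ∫ u in Set.Ioi s, Real.exp (-(c * u)) * u ^ p := by
        rw [← mul_assoc, mul_inv_cancel₀ hs.ne', one_mul]

/-- Closed form of the fractional-power-control term `P_FPC` in Theorem 1 of the paper: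
the mean transmit power `P₀ κ^ε (ν²+z²)^(αε/2)` integrated against the Rayleigh-type
serving-distance density `2πβλ ν e^(−πβλ ν²)` over `[r_e, r_m]` equals the bracketed
exponential-integral expression. -/
theorem stmt_5 (P₀ κ ε α lam β z re rm : ℝ)
    (hP₀ : 0 < P₀) (hκ : 0 < κ) (hε : 0 ≤ ε) (hα : 0 < α) (hlam : 0 < lam)
    (hβ : 0 < β) (hz : 0 ≤ z) (hre : 0 < re) (hrerm : re < rm) :
    (∫ ν in re..rm, P₀ * κ ^ ε * (ν ^ 2 + z ^ 2) ^ (α * ε / 2)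
        * (2 * Real.pi * β * lam * ν * Real.exp (-(Real.pi * β * lam * ν ^ 2))))
      = P₀ * Real.pi * lam * β * Real.exp (Real.pi * lam * β * z ^ 2) * κ ^ ε
        * ((re ^ 2 + z ^ 2) ^ (α * ε / 2 + 1)
              * expInt (-(α * ε / 2)) (Real.pi * lam * β * (re ^ 2 + z ^ 2))
            - (rm ^ 2 + z ^ 2) ^ (α * ε / 2 + 1)
              * expInt (-(α * ε / 2)) (Real.pi * lam * β * (rm ^ 2 + z ^ 2))) := by
  set p : ℝ := α * ε / 2 with hp_def
  set c : ℝ := Real.pi * lam * β with hc_def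
  have hp : 0 ≤ p := by positivity
  have hc : 0 < c := by positivity
  set a : ℝ := re ^ 2 + z ^ 2 with ha_def
  set b : ℝ := rm ^ 2 + z ^ 2 with hb_def
  have ha : 0 < a := add_pos_of_pos_of_nonneg (pow_pos hre 2) (sq_nonneg z)
  have hb : 0 < b := add_pos_of_pos_of_nonneg (pow_pos (hre.trans hrerm) 2) (sq_nonneg z)
  have hab : a < b := by
    have : re ^ 2 < rm ^ 2 := by nlinarith
    simp only [ha_def, hb_def]; linarith
  set C : ℝ := P₀ * κ ^ ε * c * Real.exp (c * z ^ 2) with hC_def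
  set g : ℝ → ℝ := fun u => Real.exp (-(c * u)) * u ^ p with hg_def
  -- Step 1 : change of variables in LHS
  have hcont_g : Continuous fun u : ℝ => C * g u := by
    apply Continuous.mul continuous_const
    apply Continuous.mul
    · exact Real.continuous_exp.comp (by continuity)
    · refine continuous_iff_continuousAt.mpr (fun x => ?_)
      exact Real.continuousAt_rpow_const x p (Or.inr hp)
  have hderiv : ∀ x ∈ Set.uIcc re rm, HasDerivAt (fun ν : ℝ => ν ^ 2 + z ^ 2) (2 * x) x := by
    intro x _
    simpa using ((hasDerivAt_pow 2 x).add_const (z ^ 2))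
  have hsub := intervalIntegral.integral_comp_smul_deriv hderiv
      ((continuous_const.mul continuous_id).continuousOn : ContinuousOn (fun x : ℝ => 2 * x) (Set.uIcc re rm)) hcont_g
  have hLHS : (∫ ν in re..rm, P₀ * κ ^ ε * (ν ^ 2 + z ^ 2) ^ (α * ε / 2)
        * (2 * Real.pi * β * lam * ν * Real.exp (-(Real.pi * β * lam * ν ^ 2))))
      = ∫ u in a..b, C * g u := by
    rw [← hsub]
    refine intervalIntegral.integral_congr (fun ν _ => ?_)
    simp only [smul_eq_mul, Function.comp, hg_def, hC_def, hc_def, hp_def]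
    have hexp : Real.exp (Real.pi * lam * β * z ^ 2)
        * Real.exp (-(Real.pi * lam * β * (ν ^ 2 + z ^ 2)))
        = Real.exp (-(Real.pi * β * lam * ν ^ 2)) := by
      rw [← Real.exp_add]; ring_nf
    rw [← hexp]
    ring
  -- Step 2 : the RHS bracket as an interval integral
  have hint : IntegrableOn g (Set.Ioi a) := integrableOn_exp_neg_mul_rpow hp hc ha
  have hsplit : (∫ u in Set.Ioi a, g u)
      = (∫ u in Set.Ioc a b, g u) + ∫ u in Set.Ioi b, g u := by
    rw [← MeasureTheory.setIntegral_union (Set.Ioc_disjoint_Ioi le_rfl) measurableSet_Ioi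
      (hint.mono_set Set.Ioc_subset_Ioi_self)
      (hint.mono_set (Set.Ioi_subset_Ioi hab.le)),
      Set.Ioc_union_Ioi_eq_Ioi hab.le]
  have hbracket : a ^ (p + 1) * expInt (-p) (c * a) - b ^ (p + 1) * expInt (-p) (c * b)
      = ∫ u in a..b, g u := by
    rw [expInt_eq_integral hp hc ha, expInt_eq_integral hp hc hb,
      intervalIntegral.integral_of_le hab.le, hsplit]
    ring
  rw [hLHS, intervalIntegral.integral_const_mul, ← hbracket]
  simp only [hC_def, hc_def]
  ring
end

section
/- Let P₀ > 0, P_m > 0, κ > 0, ε > 0, α > 2, λ_b > 0, λ_u > 0, β > 0, z ≥ 0, and 0 < r_e ≤ r_m ≤ τ be real numbers with P₀ κ^ε (r_m² + z²)^{αε/2} = P_m. Then the double integral ∫_{r_e}^{τ} ( ∫_{r_e}^{τ} min( P₀ κ^ε (v² + z²)^{αε/2}, P_m ) · 2πβλ_b v e^{−πβλ_b v²} dv ) · κ⁻¹ r^{−α} · 2πλ_u r dr equals 2πλ_u · ( κ⁻¹ r_e^{2−α} − κ⁻¹ τ^{2−α} ) / (α − 2) · ( P_FPC + P_m ( e^{−πβλ_b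 r_m²} − e^{−πβλ_b τ²} ) ), where P_FPC = P₀ πλ_b β e^{πλ_b β z²} κ^ε ( (r_e² + z²)^{αε/2+1} E_{−αε/2}(πλ_b β (r_e² + z²)) − (r_m² + z²)^{αε/2+1} E_{−αε/2}(πλ_b β (r_m² + z²)) ) and E_n(x) = ∫_1^∞ e^{−xt} t^{−n} dt. -/
open Real MeasureTheory intervalIntegral

lemma aux_integrableOn {n c a : ℝ} (hn : -1 < n) (hc : 0 < c) (ha : 0 ≤ a) :
    IntegrableOn (fun u : ℝ => u ^ n * Real.exp (-(c * u))) (Set.Ioi a) := by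
  have h := integrableOn_rpow_mul_exp_neg_mul_rpow (p := 1) hn one_pos hc
  have h2 : IntegrableOn (fun u : ℝ => u ^ n * Real.exp (-(c * u))) (Set.Ioi 0) := by
    refine h.congr_fun (fun x hx => ?_) measurableSet_Ioi
    beta_reduce
    rw [Real.rpow_one, neg_mul]
  exact h2.mono_set (Set.Ioi_subset_Ioi ha)

lemma aux_IoiInt {n c a : ℝ} (ha : 0 < a) :
    ∫ u in Set.Ioi a, u ^ n * Real.exp (-(c * u)) = a ^ (n + 1) * expInt (-n) (c * a) := by
  set g : ℝ → ℝ := fun s => Real.exp (-(c * s)) * (s ^ n * a ^ (-n)) with hg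
  have h1 : expInt (-n) (c * a) = ∫ t in Set.Ioi (1 : ℝ), g (a * t) := by
    rw [expInt, MeasureTheory.integral_Ici_eq_integral_Ioi]
    refine setIntegral_congr_fun measurableSet_Ioi (fun t ht => ?_)
    have ht1 : (0:ℝ) < t := lt_trans one_pos (Set.mem_Ioi.mp ht)
    simp only [hg]
    rw [Real.mul_rpow ha.le ht1.le, Real.rpow_neg ht1.le]
    have han : a ^ n * a ^ (-n) = 1 := by
      rw [← Real.rpow_add ha]; simp
    rw [div_eq_mul_inv, inv_inv, show -(c * (a * t)) = -(c * a * t) from by ring,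
      show a ^ n * t ^ n * a ^ (-n) = t ^ n * (a ^ n * a ^ (-n)) from by ring, han, mul_one]
  have h2 : (∫ t in Set.Ioi (1 : ℝ), g (a * t)) = a⁻¹ • ∫ s in Set.Ioi (a * 1), g s :=
    MeasureTheory.integral_comp_mul_left_Ioi g 1 ha
  have h3 : (∫ s in Set.Ioi a, g s)
      = (∫ s in Set.Ioi a, s ^ n * Real.exp (-(c * s))) * a ^ (-n) := by
    rw [← MeasureTheory.integral_mul_const]
    refine setIntegral_congr_fun measurableSet_Ioi (fun s _ => ?_)
    simp only [hg]; ring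
  rw [h1, h2, mul_one, smul_eq_mul, h3]
  have key : a ^ (n + 1) * (a⁻¹ * ((∫ s in Set.Ioi a, s ^ n * Real.exp (-(c * s))) * a ^ (-n)))
      = (∫ s in Set.Ioi a, s ^ n * Real.exp (-(c * s)))
        * (a ^ (n + 1) * a⁻¹ * a ^ (-n)) := by ring
  rw [key, ← Real.rpow_neg_one a, ← Real.rpow_add ha, ← Real.rpow_add ha]
  norm_num

lemma aux_intervalInt {n c a b : ℝ} (hn : -1 < n) (hc : 0 < c) (ha : 0 < a) (hab : a ≤ b) :
    ∫ u in a..b, u ^ n * Real.exp (-(c * u))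
      = a ^ (n + 1) * expInt (-n) (c * a) - b ^ (n + 1) * expInt (-n) (c * b) := by
  have hb : 0 < b := lt_of_lt_of_le ha hab
  rw [← aux_IoiInt ha, ← aux_IoiInt hb, intervalIntegral.integral_of_le hab]
  have hsplit : (∫ u in Set.Ioi a, u ^ n * Real.exp (-(c * u)))
      = (∫ u in Set.Ioc a b, u ^ n * Real.exp (-(c * u)))
        + ∫ u in Set.Ioi b, u ^ n * Real.exp (-(c * u)) := by
    rw [← Set.Ioc_union_Ioi_eq_Ioi hab]
    exact setIntegral_union Set.Ioc_disjoint_Ioi_same measurableSet_Ioi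
      ((aux_integrableOn hn hc ha.le).mono_set Set.Ioc_subset_Ioi_self)
      (aux_integrableOn hn hc hb.le)
  linarith

/-- Deterministic core of Theorem 1 of the paper (mean uplink EMF exposure): the iterated
integral of the mean truncated-fractional-power-control transmit power, weighted by the
user-to-user path gain `κ⁻¹ r^(−α)` and intensity `2πλ_u r` over the annulus `r_e < r < τ`,
equals `2πλ_u (κ⁻¹ r_e^(2−α) − κ⁻¹ τ^(2−α))/(α−2) · (P_FPC + P_m(e^(−πβλ_b r_m²) − e^(−πβλ_b τ²)))`. -/
theorem stmt_7 (P₀ Pm κ ε α lamb lamu β z re rm τ : ℝ)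
    (hP₀ : 0 < P₀) (hPm : 0 < Pm) (hκ : 0 < κ) (hε : 0 < ε) (hα : 2 < α)
    (hlamb : 0 < lamb) (hlamu : 0 < lamu) (hβ : 0 < β) (hz : 0 ≤ z)
    (hre : 0 < re) (hrerm : re ≤ rm) (hrmτ : rm ≤ τ)
    (hcap : P₀ * κ ^ ε * (rm ^ 2 + z ^ 2) ^ (α * ε / 2) = Pm)
    (PFPC : ℝ)
    (hPFPC : PFPC = P₀ * Real.pi * lamb * β * Real.exp (Real.pi * lamb * β * z ^ 2) * κ ^ ε
      * ((re ^ 2 + z ^ 2) ^ (α * ε / 2 + 1)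
            * expInt (-(α * ε / 2)) (Real.pi * lamb * β * (re ^ 2 + z ^ 2))
          - (rm ^ 2 + z ^ 2) ^ (α * ε / 2 + 1)
            * expInt (-(α * ε / 2)) (Real.pi * lamb * β * (rm ^ 2 + z ^ 2)))) :
    (∫ r in re..τ,
        (∫ v in re..τ, min (P₀ * κ ^ ε * (v ^ 2 + z ^ 2) ^ (α * ε / 2)) Pm
            * (2 * Real.pi * β * lamb * v * Real.exp (-(Real.pi * β * lamb * v ^ 2))))
          * (κ⁻¹ * r ^ (-α)) * (2 * Real.pi * lamu * r))
      = 2 * Real.pi * lamu * ((κ⁻¹ * re ^ (2 - α) - κ⁻¹ * τ ^ (2 - α)) / (α - 2))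
        * (PFPC + Pm * (Real.exp (-(Real.pi * β * lamb * rm ^ 2))
            - Real.exp (-(Real.pi * β * lamb * τ ^ 2)))) := by
  have hreτ : re ≤ τ := le_trans hrerm hrmτ
  have hn : 0 < α * ε / 2 := by positivity
  have hc : 0 < Real.pi * lamb * β := by positivity
  -- continuity of the inner integrand
  have hcpow : Continuous (fun v : ℝ => (v ^ 2 + z ^ 2) ^ (α * ε / 2)) :=
    ((continuous_pow 2).add continuous_const).rpow_const (fun x => Or.inr hn.le)
  have hctail : Continuous (fun v : ℝ =>
      2 * Real.pi * β * lamb * v * Real.exp (-(Real.pi * β * lamb * v ^ 2))) :=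
    (continuous_const.mul continuous_id).mul
      ((continuous_const.mul (continuous_pow 2)).neg.rexp)
  have hcF : Continuous (fun v : ℝ =>
      min (P₀ * κ ^ ε * (v ^ 2 + z ^ 2) ^ (α * ε / 2)) Pm
        * (2 * Real.pi * β * lamb * v * Real.exp (-(Real.pi * β * lamb * v ^ 2)))) :=
    ((continuous_const.mul hcpow).min continuous_const).mul hctail
  -- the inner integral
  have hI : (∫ v in re..τ, min (P₀ * κ ^ ε * (v ^ 2 + z ^ 2) ^ (α * ε / 2)) Pm
        * (2 * Real.pi * β * lamb * v * Real.exp (-(Real.pi * β * lamb * v ^ 2))))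
      = PFPC + Pm * (Real.exp (-(Real.pi * β * lamb * rm ^ 2))
          - Real.exp (-(Real.pi * β * lamb * τ ^ 2))) := by
    rw [← intervalIntegral.integral_add_adjacent_intervals
      (a := re) (b := rm) (c := τ)
      (hcF.intervalIntegrable re rm) (hcF.intervalIntegrable rm τ)]
    have hhead : (∫ v in re..rm, min (P₀ * κ ^ ε * (v ^ 2 + z ^ 2) ^ (α * ε / 2)) Pm
          * (2 * Real.pi * β * lamb * v * Real.exp (-(Real.pi * β * lamb * v ^ 2))))
        = PFPC := by
      have hstep1 : (∫ v in re..rm, min (P₀ * κ ^ ε * (v ^ 2 + z ^ 2) ^ (α * ε / 2)) Pm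
            * (2 * Real.pi * β * lamb * v * Real.exp (-(Real.pi * β * lamb * v ^ 2))))
          = ∫ v in re..rm, (2 * v) •
              ((fun u : ℝ => (P₀ * κ ^ ε * (Real.pi * lamb * β)
                  * Real.exp (Real.pi * lamb * β * z ^ 2))
                * (u ^ (α * ε / 2) * Real.exp (-(Real.pi * lamb * β * u))))
               ∘ (fun v : ℝ => v ^ 2 + z ^ 2)) v := by
        refine intervalIntegral.integral_congr (fun v hv => ?_)
        rw [Set.uIcc_of_le hrerm] at hv
        obtain ⟨hv1, hv2⟩ := hv
        have hvpos : 0 < v := lt_of_lt_of_le hre hv1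
        have hmin : min (P₀ * κ ^ ε * (v ^ 2 + z ^ 2) ^ (α * ε / 2)) Pm
            = P₀ * κ ^ ε * (v ^ 2 + z ^ 2) ^ (α * ε / 2) := by
          refine min_eq_left ?_
          rw [← hcap]
          refine mul_le_mul_of_nonneg_left ?_ (by positivity)
          exact Real.rpow_le_rpow (by positivity) (by nlinarith) hn.le
        have hexp : Real.exp (Real.pi * lamb * β * z ^ 2)
            * Real.exp (-(Real.pi * lamb * β * (v ^ 2 + z ^ 2)))
            = Real.exp (-(Real.pi * β * lamb * v ^ 2)) := by
          rw [← Real.exp_add]; congr 1; ring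
        simp only [Function.comp, smul_eq_mul, hmin]
        rw [← hexp]; ring
      have hfder : ∀ x ∈ Set.uIcc re rm, HasDerivAt (fun v : ℝ => v ^ 2 + z ^ 2) (2 * x) x :=
        fun x _ => by simpa using (hasDerivAt_pow 2 x).add_const (z ^ 2)
      have hf'c : ContinuousOn (fun x : ℝ => 2 * x) (Set.uIcc re rm) :=
        (continuous_const.mul continuous_id).continuousOn
      have hgc : Continuous (fun u : ℝ => (P₀ * κ ^ ε * (Real.pi * lamb * β)
            * Real.exp (Real.pi * lamb * β * z ^ 2))
          * (u ^ (α * ε / 2) * Real.exp (-(Real.pi * lamb * β * u)))) :=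
        continuous_const.mul ((continuous_id.rpow_const (fun x => Or.inr hn.le)).mul
          ((continuous_const.mul continuous_id).neg.rexp))
      have hcsd := intervalIntegral.integral_comp_smul_deriv hfder hf'c hgc
      have hrest : (∫ u in (re ^ 2 + z ^ 2)..(rm ^ 2 + z ^ 2),
            (P₀ * κ ^ ε * (Real.pi * lamb * β) * Real.exp (Real.pi * lamb * β * z ^ 2))
              * (u ^ (α * ε / 2) * Real.exp (-(Real.pi * lamb * β * u)))) = PFPC := by
        rw [intervalIntegral.integral_const_mul,
          aux_intervalInt (by linarith) hc (by positivity) (by nlinarith)]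
        rw [hPFPC]; ring
      exact hstep1.trans (hcsd.trans hrest)
    have htail : (∫ v in rm..τ, min (P₀ * κ ^ ε * (v ^ 2 + z ^ 2) ^ (α * ε / 2)) Pm
          * (2 * Real.pi * β * lamb * v * Real.exp (-(Real.pi * β * lamb * v ^ 2))))
        = Pm * (Real.exp (-(Real.pi * β * lamb * rm ^ 2))
            - Real.exp (-(Real.pi * β * lamb * τ ^ 2))) := by
      have hstep1 : (∫ v in rm..τ, min (P₀ * κ ^ ε * (v ^ 2 + z ^ 2) ^ (α * ε / 2)) Pm
            * (2 * Real.pi * β * lamb * v * Real.exp (-(Real.pi * β * lamb * v ^ 2))))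
          = ∫ v in rm..τ, Pm
              * (2 * Real.pi * β * lamb * v * Real.exp (-(Real.pi * β * lamb * v ^ 2))) := by
        refine intervalIntegral.integral_congr (fun v hv => ?_)
        rw [Set.uIcc_of_le hrmτ] at hv
        obtain ⟨hv1, hv2⟩ := hv
        have hrmpos : 0 < rm := lt_of_lt_of_le hre hrerm
        have hmin : min (P₀ * κ ^ ε * (v ^ 2 + z ^ 2) ^ (α * ε / 2)) Pm = Pm := by
          refine min_eq_right ?_
          rw [← hcap]
          refine mul_le_mul_of_nonneg_left ?_ (by positivity)
          exact Real.rpow_le_rpow (by positivity) (by nlinarith) hn.le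
        rw [hmin]
      rw [hstep1]
      have hderiv : ∀ x ∈ Set.uIcc rm τ,
          HasDerivAt (fun v : ℝ => -(Pm * Real.exp (-(Real.pi * β * lamb * v ^ 2))))
            (Pm * (2 * Real.pi * β * lamb * x
              * Real.exp (-(Real.pi * β * lamb * x ^ 2)))) x := by
        intro x _
        have h1 : HasDerivAt (fun v : ℝ => -(Real.pi * β * lamb * v ^ 2))
            (-(Real.pi * β * lamb * (2 * x ^ 1))) x :=
          ((hasDerivAt_pow 2 x).const_mul (Real.pi * β * lamb)).neg
        have h3 : HasDerivAt (fun v : ℝ => -(Pm * Real.exp (-(Real.pi * β * lamb * v ^ 2))))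
            (-(Pm * (Real.exp (-(Real.pi * β * lamb * x ^ 2)) * -(Real.pi * β * lamb * (2 * x ^ 1))))) x :=
          (h1.exp.const_mul Pm).neg
        convert h3 using 1
        simp only [pow_one]; ring
      rw [intervalIntegral.integral_eq_sub_of_hasDerivAt hderiv
        ((continuous_const.mul hctail).intervalIntegrable rm τ)]
      ring
    rw [hhead, htail]
  rw [hI]
  -- outer integral
  have hstep2 : (∫ r in re..τ,
        (PFPC + Pm * (Real.exp (-(Real.pi * β * lamb * rm ^ 2))
            - Real.exp (-(Real.pi * β * lamb * τ ^ 2))))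
          * (κ⁻¹ * r ^ (-α)) * (2 * Real.pi * lamu * r))
      = ∫ r in re..τ,
          ((PFPC + Pm * (Real.exp (-(Real.pi * β * lamb * rm ^ 2))
              - Real.exp (-(Real.pi * β * lamb * τ ^ 2)))) * κ⁻¹ * (2 * Real.pi * lamu))
            * r ^ (-α + 1) := by
    refine intervalIntegral.integral_congr (fun r hr => ?_)
    rw [Set.uIcc_of_le hreτ] at hr
    have hrpos : 0 < r := lt_of_lt_of_le hre hr.1
    rw [Real.rpow_add_one hrpos.ne']
    ring
  rw [hstep2, intervalIntegral.integral_const_mul, integral_rpow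
    (Or.inr ⟨by intro h; rw [show α = (2:ℝ) from by linarith] at hα; exact lt_irrefl 2 hα,
      fun h => by rw [Set.uIcc_of_le hreτ] at h; linarith [h.1]⟩)]
  rw [show -α + 1 + 1 = 2 - α from by ring]
  have hinv : (2 - α)⁻¹ = -(α - 2)⁻¹ := by
    rw [show (2:ℝ) - α = -(α - 2) from by ring, inv_neg]
  rw [div_eq_mul_inv, div_eq_mul_inv, hinv]
  ring
end
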